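/- In the Riemannian Lie algebra family, the components R_ijks = R(X_i,X_j,X_k,X_s) of the curvature tensor satisfy: R₁₂₂₁ = ¼(λ₁²+λ₂²), R₁₃₃₁ = ¼(λ₁²+λ₄²), R₁₄₄₁ = ¼(λ₂²+λ₄²), R₂₃₃₂ = ¼(λ₁²+λ₃²), R₂₄₄₂ = ¼(λ₂²+λ₃²), R₃₄₄₃ = ¼(λ₃²+λ₄²), R₁₃₄₁ = R₂₃₄₂ = ¼λ₁λ₂, R₃₁₂₃ = R₄₁₂₄ = ¼λ₃λ₄, R₁₂₃₁ = R₄₂₃₄ = ¼λ₂λ₄, R₂₁₄₂ = R₃₁₄₃ = ¼λ₁λ₃, R₁₂₄₁ = R₃₂₄₃ = −¼λ₁λ₄, R₂₁₃₂ = R₄₁₃₄ = −¼λ₂λ₃. -/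

import Mathlib

noncomputable section

/-- The inner product for which the basis `b` is orthonormal. -/
def gR {L : Type*} [AddCommGroup L] [Module ℝ L] (b : Module.Basis (Fin 4) ℝ L) (x y : L) : ℝ :=
  ∑ i, b.repr x i * b.repr y i

/-- The almost product structure `P` with `PX₁ = X₃`, `PX₂ = X₄`, `PX₃ = X₁`, `PX₄ = X₂`. -/
def PR {L : Type*} [AddCommGroup L] [Module ℝ L] (b : Module.Basis (Fin 4) ℝ L) : L →ₗ[ℝ] L :=
  b.constr ℝ ![b 2, b 3, b 0, b 1]

/-- `(∇ₓP)y = (1/2)([x,Py] − P[x,y])`. -/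
def nablaP {L : Type*} [LieRing L] [LieAlgebra ℝ L] (b : Module.Basis (Fin 4) ℝ L) (x y : L) : L :=
  (2⁻¹ : ℝ) • (⁅x, PR b y⁆ - PR b ⁅x, y⁆)

/-- `F(x,y,z) = g((∇ₓP)y, z)`. -/
def FR {L : Type*} [LieRing L] [LieAlgebra ℝ L] (b : Module.Basis (Fin 4) ℝ L) (x y z : L) : ℝ :=
  gR b (nablaP b x y) z

/-- The curvature tensor `R(x,y,z,w) = −(1/4)g([x,y],[z,w])`. -/
def RT {L : Type*} [LieRing L] [LieAlgebra ℝ L] (b : Module.Basis (Fin 4) ℝ L) (x y z w : L) : ℝ :=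
  -(4⁻¹ : ℝ) * gR b ⁅x, y⁆ ⁅z, w⁆

/-- The Ricci tensor `ρ(y,z) = Σᵢ R(Xᵢ,y,z,Xᵢ)`. -/
def ricR {L : Type*} [LieRing L] [LieAlgebra ℝ L] (b : Module.Basis (Fin 4) ℝ L) (y z : L) : ℝ :=
  ∑ i, RT b (b i) y z (b i)

/-- The scalar curvature `τ = Σᵢ ρ(Xᵢ,Xᵢ)`. -/
def tauR {L : Type*} [LieRing L] [LieAlgebra ℝ L] (b : Module.Basis (Fin 4) ℝ L) : ℝ :=
  ∑ i, ricR b (b i) (b i)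

/-- The Nijenhuis tensor `N(x,y) = [x,y] + P[Px,y] + P[x,Py] − [Px,Py]`. -/
def NijR {L : Type*} [LieRing L] [LieAlgebra ℝ L] (b : Module.Basis (Fin 4) ℝ L) (x y : L) : L :=
  ⁅x, y⁆ + PR b ⁅PR b x, y⁆ + PR b ⁅x, PR b y⁆ - ⁅PR b x, PR b y⁆

/-- Sectional curvature of the 2-plane spanned by `Xᵢ` and `Xⱼ`. -/
def sectR {L : Type*} [LieRing L] [LieAlgebra ℝ L] (b : Module.Basis (Fin 4) ℝ L) (i j : Fin 4) : ℝ :=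
  RT b (b i) (b j) (b j) (b i) /
    (gR b (b i) (b i) * gR b (b j) (b j) - (gR b (b i) (b j)) ^ 2)

/-- Components (3.12) of the curvature tensor in the Riemannian family. -/
theorem R_components_riemannian
    (L : Type*) [LieRing L] [LieAlgebra ℝ L] (b : Module.Basis (Fin 4) ℝ L)
    (l1 l2 l3 l4 : ℝ)
    (h12 : ⁅b 0, b 1⁆ = l1 • b 2 + l2 • b 3)
    (h13 : ⁅b 0, b 2⁆ = -(l1 • b 1) + l4 • b 3)
    (h14 : ⁅b 0, b 3⁆ = -(l2 • b 1) - l4 • b 2)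
    (h23 : ⁅b 1, b 2⁆ = l1 • b 0 + l3 • b 3)
    (h24 : ⁅b 1, b 3⁆ = l2 • b 0 - l3 • b 2)
    (h34 : ⁅b 2, b 3⁆ = l4 • b 0 + l3 • b 1)
    : RT b (b 0) (b 1) (b 1) (b 0) = 4⁻¹ * (l1 ^ 2 + l2 ^ 2) ∧
      RT b (b 0) (b 2) (b 2) (b 0) = 4⁻¹ * (l1 ^ 2 + l4 ^ 2) ∧
      RT b (b 0) (b 3) (b 3) (b 0) = 4⁻¹ * (l2 ^ 2 + l4 ^ 2) ∧
      RT b (b 1) (b 2) (b 2) (b 1) = 4⁻¹ * (l1 ^ 2 + l3 ^ 2) ∧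
      RT b (b 1) (b 3) (b 3) (b 1) = 4⁻¹ * (l2 ^ 2 + l3 ^ 2) ∧
      RT b (b 2) (b 3) (b 3) (b 2) = 4⁻¹ * (l3 ^ 2 + l4 ^ 2) ∧
      RT b (b 0) (b 2) (b 3) (b 0) = 4⁻¹ * (l1 * l2) ∧
      RT b (b 1) (b 2) (b 3) (b 1) = 4⁻¹ * (l1 * l2) ∧
      RT b (b 2) (b 0) (b 1) (b 2) = 4⁻¹ * (l3 * l4) ∧
      RT b (b 3) (b 0) (b 1) (b 3) = 4⁻¹ * (l3 * l4) ∧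
      RT b (b 0) (b 1) (b 2) (b 0) = 4⁻¹ * (l2 * l4) ∧
      RT b (b 3) (b 1) (b 2) (b 3) = 4⁻¹ * (l2 * l4) ∧
      RT b (b 1) (b 0) (b 3) (b 1) = 4⁻¹ * (l1 * l3) ∧
      RT b (b 2) (b 0) (b 3) (b 2) = 4⁻¹ * (l1 * l3) ∧
      RT b (b 0) (b 1) (b 3) (b 0) = -(4⁻¹ * (l1 * l4)) ∧
      RT b (b 2) (b 1) (b 3) (b 2) = -(4⁻¹ * (l1 * l4)) ∧
      RT b (b 1) (b 0) (b 2) (b 1) = -(4⁻¹ * (l2 * l3)) ∧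
      RT b (b 3) (b 0) (b 2) (b 3) = -(4⁻¹ * (l2 * l3)) := by
  have h21 : ⁅b 1, b 0⁆ = -(l1 • b 2 + l2 • b 3) := by rw [← lie_skew, h12]
  have h31 : ⁅b 2, b 0⁆ = -(-(l1 • b 1) + l4 • b 3) := by rw [← lie_skew, h13]
  have h41 : ⁅b 3, b 0⁆ = -(-(l2 • b 1) - l4 • b 2) := by rw [← lie_skew, h14]
  have h32 : ⁅b 2, b 1⁆ = -(l1 • b 0 + l3 • b 3) := by rw [← lie_skew, h23]
  have h42 : ⁅b 3, b 1⁆ = -(l2 • b 0 - l3 • b 2) := by rw [← lie_skew, h24]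
  have h43 : ⁅b 3, b 2⁆ = -(l4 • b 0 + l3 • b 1) := by rw [← lie_skew, h34]
  refine ⟨?_, ?_, ?_, ?_, ?_, ?_, ?_, ?_, ?_, ?_, ?_, ?_, ?_, ?_, ?_, ?_, ?_, ?_⟩ <;>
    simp [RT, gR, h12, h13, h14, h23, h24, h34, h21, h31, h41, h32, h42, h43,
      Fin.sum_univ_four, map_add, map_smul, map_neg, map_sub, Module.Basis.repr_self,
      Finsupp.single_apply] <;> ring
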